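/- arXiv:2402.17640 — 2 statements merged into one kernel-verified Lean document; each statement's English description precedes it below -/
import Mathlib

section
/- If the set of names {a} ∪ S is prefix-free and a is nonempty, then for any namespace M, the set (S \ {a}) ∪ { a ++ m | m ∈ M } obtained by 'grafting' M at leaf a is again prefix-free (this is substitution of one namespace into a leaf of another). -/
def StrictPrefix (p n : List String) : Prop := ∃ s : List String, s ≠ [] ∧ n = p ++ s

def PrefixFree (N : Set (List String)) : Prop :=
  ∀ n ∈ N, ∀ n' ∈ N, ¬ StrictPrefix n n'

theorem grafting_prefixFree
    (a : List String) (ha : a ≠ [])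
    (S : Set (List String)) (hS : PrefixFree ({a} ∪ S))
    (M : Set (List String)) (hMfin : M.Finite) (hM : PrefixFree M) :
    PrefixFree ((S \ {a}) ∪ {x | ∃ m ∈ M, x = a ++ m}) := by
  rintro n hn n' hn' ⟨s, hs, rfl⟩
  rcases hn with ⟨hnS, hna⟩ | ⟨m, hm, rfl⟩
  · rcases hn' with ⟨hn'S, hn'a⟩ | ⟨m', hm', heq⟩
    · exact hS n (Or.inr hnS) (n ++ s) (Or.inr hn'S) ⟨s, hs, rfl⟩
    · -- n ++ s = a ++ m', both n and a prefixes of it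
      have h1 : n <+: a ++ m' := heq ▸ ⟨s, rfl⟩
      have h2 : a <+: a ++ m' := ⟨m', rfl⟩
      rcases List.prefix_or_prefix_of_prefix h1 h2 with h | h
      · rcases h with ⟨t, rfl⟩
        rcases eq_or_ne t [] with rfl | ht
        · exact hna (by simp)
        · exact hS n (Or.inr hnS) (n ++ t) (Or.inl rfl) ⟨t, ht, rfl⟩
      · rcases h with ⟨t, rfl⟩
        rcases eq_or_ne t [] with rfl | ht
        · exact hna (by simp)
        · exact hS a (Or.inl rfl) (a ++ t) (Or.inr hnS) ⟨t, ht, rfl⟩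
  · rcases hn' with ⟨hn'S, hn'a⟩ | ⟨m', hm', heq⟩
    · -- a ++ m ++ s ∈ S, a strict prefix of it
      have : a ++ m ++ s ≠ a := by
        intro h
        have := congrArg List.length h
        simp at this
        exact hs this.2
      exact hS a (Or.inl rfl) (a ++ m ++ s) (Or.inr hn'S)
        ⟨m ++ s, fun h => this (by rw [List.append_assoc, h, List.append_nil]), by rw [List.append_assoc]⟩
    · -- a ++ m ++ s = a ++ m', so m' = m ++ s
      have : m' = m ++ s := by
        have := heq
        rw [List.append_assoc] at this
        exact (List.append_cancel_left this.symm)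
      exact hM m hm m' hm' ⟨s, hs, this⟩
end

section
/- Consider the isolated DC shunt motor dynamics (with q.e = E_const constant, p.f = 0): ḃ_s = E_const − R_s i_s, ḃ = E_const − b_s ω − R_r i_r, ṗ = b_s i_r − d_r ω, ṡ = (1/θ₀)(R_s i_s² + R_r i_r² + d_r ω²), where i_s = b_s/L_s, i_r = b/L_r, ω = p/J_r, with L_s, L_r, J_r, θ₀ > 0 and R_s, R_r, d_r ≥ 0. Then along any solution, the total energy E_tot = b_s²/(2L_s) + b²/(2L_r) + p²/(2J_r) + θ₀·s satisfies d/dt E_tot = E_const·(i_s + i_r), i.e., energy changes only by the electrical power supplied, and ṡ ≥ 0. -/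
theorem motor_energy_balance_and_entropy_production
    (L_s L_r J_r θ₀ : ℝ) (hLs : 0 < L_s) (hLr : 0 < L_r) (hJr : 0 < J_r) (hθ₀ : 0 < θ₀)
    (R_s R_r d_r : ℝ) (hRs : 0 ≤ R_s) (hRr : 0 ≤ R_r) (hdr : 0 ≤ d_r)
    (E_const : ℝ)
    (b_s b p s : ℝ → ℝ) (t : ℝ)
    (hbs : HasDerivAt b_s (E_const - R_s * (b_s t / L_s)) t)
    (hb : HasDerivAt b (E_const - b_s t * (p t / J_r) - R_r * (b t / L_r)) t)
    (hp : HasDerivAt p (b_s t * (b t / L_r) - d_r * (p t / J_r)) t)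
    (hs : HasDerivAt s ((1 / θ₀) * (R_s * (b_s t / L_s)^2 + R_r * (b t / L_r)^2
        + d_r * (p t / J_r)^2)) t) :
    HasDerivAt (fun τ => b_s τ^2 / (2 * L_s) + b τ^2 / (2 * L_r) + p τ^2 / (2 * J_r)
        + θ₀ * s τ)
      (E_const * (b_s t / L_s + b t / L_r)) t ∧
    0 ≤ (1 / θ₀) * (R_s * (b_s t / L_s)^2 + R_r * (b t / L_r)^2 + d_r * (p t / J_r)^2) := by
  constructor
  · have h := ((((hbs.pow 2).div_const (2*L_s)).add ((hb.pow 2).div_const (2*L_r))).add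
      ((hp.pow 2).div_const (2*J_r))).add (hs.const_mul θ₀)
    convert h using 1
    · rfl
    · rfl
    · rfl
    field_simp
    ring
  · positivity
end
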